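/- arXiv:2011.14312 — 2 statements merged into one kernel-verified Lean document; each statement's English description precedes it below -/
import Mathlib

section
/- Let Ω° ⊆ ℝ^n be convex, U ∈ ℝ^n an upper bound such that every Y ∈ Ω° satisfies Y ≤ U, let W ≤ 0 componentwise, X̃ ∈ Ω°, V ∈ ℝ^n with ⟨W, U − X̃ − V⟩ ≥ −‖W‖·‖V‖ where X̃ = X + V and ⟨W, U − X⟩ = 0. Then −W ∈ ∂_ν δ_{Ω°}(X̃) for ν = ‖W‖·‖V‖, i.e., for every Y ∈ Ω°, ⟨−W, Y − X̃⟩ ≤ ν. -/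
/-- with Ω° convex, every Y ∈ Ω° satisfying Y ≤ U, W ≤ 0, X̃ = X + V ∈ Ω°,
complementarity ⟨W, U − X⟩ = 0, and ⟨W, U − X̃ − V⟩ ≥ −‖W‖‖V‖, one has
−W ∈ ∂_ν δ_{Ω°}(X̃) with ν = ‖W‖·‖V‖, i.e. ⟨−W, Y − X̃⟩ ≤ ν for all Y ∈ Ω°. -/
theorem stmt13 (n : ℕ) (Ω : Set (EuclideanSpace ℝ (Fin n)))
    (U W X V Xt : EuclideanSpace ℝ (Fin n))
    (hconv : Convex ℝ Ω)
    (hub : ∀ Y ∈ Ω, ∀ i, Y i ≤ U i)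
    (hW : ∀ i, W i ≤ 0)
    (hXt : Xt ∈ Ω) (hXtdef : Xt = X + V)
    (hcomp : (inner ℝ W (U - X) : ℝ) = 0)
    (hlb : (inner ℝ W (U - Xt - V) : ℝ) ≥ -(‖W‖ * ‖V‖)) :
    ∀ Y ∈ Ω, (inner ℝ (-W) (Y - Xt) : ℝ) ≤ ‖W‖ * ‖V‖ := by
  intro Y hY
  have hUY : (inner ℝ W (U - Y) : ℝ) ≤ 0 := by
    rw [show (inner ℝ W (U - Y) : ℝ) = ∑ i, W i * (U - Y) i from
      by simp only [PiLp.inner_apply, RCLike.inner_apply', conj_trivial]]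
    apply Finset.sum_nonpos
    intro i _
    exact mul_nonpos_of_nonpos_of_nonneg (hW i)
      (by simpa using sub_nonneg.2 (hub Y hY i))
  have hWV : (inner ℝ W V : ℝ) ≤ ‖W‖ * ‖V‖ := real_inner_le_norm W V
  have key : (inner ℝ (-W) (Y - Xt) : ℝ)
      = (inner ℝ W V : ℝ) - (inner ℝ W (U - X) : ℝ) + (inner ℝ W (U - Y) : ℝ) := by
    rw [hXtdef]
    simp only [inner_neg_left, inner_sub_right, inner_add_right]
    ring
  rw [key, hcomp]
  linarith
end

section
/- Consider the iEPPA iteration: let Ω ⊆ ℝ^n_{≥0} be compact convex with ‖X‖ ≤ ρ for all X ∈ Ω, X̃^{k}, X̃^{k+1} ∈ Ω, X^k, X^{k+1} ∈ ℝ^n_{>0}, ε_k > 0, and suppose there exists D^{k+1} ∈ ∂_{ν_k} δ_{Ω°}(X̃^{k+1}) with Δ^k = D^{k+1} + C + ε_k(∇φ(X^{k+1}) − ∇φ(X^k)), ‖Δ^k‖ ≤ η_k, and D_φ(X̃^{k+1}, X^{k+1}) ≤ μ_k, where Ω ⊆ Ω°. Then for every P ∈ Ω: ⟨C, X̃^{k+1}⟩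 ≤ ⟨C, P⟩ + ε_k(D_φ(P, X^k) − D_φ(P, X^{k+1}) − D_φ(X̃^{k+1}, X^k)) + ε_k μ_k + 2ρ η_k + ν_k. -/
/-- Bregman distance of the Boltzmann–Shannon entropy. -/
noncomputable def DphiE {n : ℕ} (X Y : EuclideanSpace ℝ (Fin n)) : ℝ :=
  ∑ i, (X i * Real.log (X i / Y i) - X i + Y i)

lemma DphiE_diff {n : ℕ} (P Xk Xk1 : EuclideanSpace ℝ (Fin n))
    (hXk : ∀ i, 0 < Xk i) (hXk1 : ∀ i, 0 < Xk1 i) :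
    DphiE P Xk - DphiE P Xk1
      = (∑ i, P i * (Real.log (Xk1 i) - Real.log (Xk i))) + ∑ i, (Xk i - Xk1 i) := by
  unfold DphiE
  rw [← Finset.sum_sub_distrib, ← Finset.sum_add_distrib]
  refine Finset.sum_congr rfl fun i _ => ?_
  by_cases h : P i = 0
  · simp [h]
  · rw [Real.log_div h (hXk i).ne', Real.log_div h (hXk1 i).ne']
    ring

/-- key descent estimate of the iEPPA iteration: with Ω compact convex
contained in Ω° and in ℝⁿ₊, ‖X‖ ≤ ρ on Ω, X̃^{k+1} ∈ Ω, X^k, X^{k+1} > 0, ε_k > 0,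
D ∈ ∂_{ν_k} δ_{Ω°}(X̃^{k+1}), Δ = D + C + ε_k(∇φ(X^{k+1}) − ∇φ(X^k)), ‖Δ‖ ≤ η_k and
D_φ(X̃^{k+1}, X^{k+1}) ≤ μ_k, it holds for every P ∈ Ω that
⟨C, X̃^{k+1}⟩ ≤ ⟨C, P⟩ + ε_k(D_φ(P,X^k) − D_φ(P,X^{k+1}) − D_φ(X̃^{k+1},X^k))
  + ε_k μ_k + 2ρ η_k + ν_k. -/
theorem stmt16 (n : ℕ) (Ω Ω' : Set (EuclideanSpace ℝ (Fin n)))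
    (C Xk Xk1 Xtk1 D Δ G : EuclideanSpace ℝ (Fin n))
    (ρ εk νk ηk μk : ℝ)
    (hcomp : IsCompact Ω) (hconvΩ : Convex ℝ Ω) (hsub : Ω ⊆ Ω')
    (hconvΩ' : Convex ℝ Ω') (hclΩ' : IsClosed Ω')
    (hΩpos : ∀ X ∈ Ω, ∀ i, 0 ≤ X i)
    (hρ : ∀ X ∈ Ω, ‖X‖ ≤ ρ)
    (hXt : Xtk1 ∈ Ω)
    (hXk : ∀ i, 0 < Xk i) (hXk1 : ∀ i, 0 < Xk1 i)
    (hεk : 0 < εk)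
    (hD : ∀ Y ∈ Ω', (inner ℝ D (Y - Xtk1) : ℝ) ≤ νk)
    (hG : ∀ i, G i = Real.log (Xk1 i) - Real.log (Xk i))
    (hΔ : Δ = D + C + εk • G)
    (hη : ‖Δ‖ ≤ ηk)
    (hμ : DphiE Xtk1 Xk1 ≤ μk) :
    ∀ P ∈ Ω, (inner ℝ C Xtk1 : ℝ) ≤ (inner ℝ C P : ℝ)
      + εk * (DphiE P Xk - DphiE P Xk1 - DphiE Xtk1 Xk)
      + εk * μk + 2 * ρ * ηk + νk := by
  intro P hP
  -- Cauchy–Schwarz bound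
  have h2ρ : ‖Xtk1 - P‖ ≤ 2 * ρ := by
    calc ‖Xtk1 - P‖ ≤ ‖Xtk1‖ + ‖P‖ := norm_sub_le _ _
      _ ≤ ρ + ρ := add_le_add (hρ _ hXt) (hρ _ hP)
      _ = 2 * ρ := by ring
  have hΔb : (inner ℝ Δ (Xtk1 - P) : ℝ) ≤ 2 * ρ * ηk := by
    calc (inner ℝ Δ (Xtk1 - P) : ℝ) ≤ ‖Δ‖ * ‖Xtk1 - P‖ := real_inner_le_norm _ _
      _ ≤ ηk * (2 * ρ) :=
        mul_le_mul hη h2ρ (norm_nonneg _) (le_trans (norm_nonneg _) hη)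
      _ = 2 * ρ * ηk := by ring
  have hDb : (inner ℝ D (P - Xtk1) : ℝ) ≤ νk := hD P (hsub hP)
  -- three-points identity
  have hGP : (inner ℝ G (P - Xtk1) : ℝ)
      = DphiE P Xk - DphiE P Xk1 - (DphiE Xtk1 Xk - DphiE Xtk1 Xk1) := by
    rw [DphiE_diff P Xk Xk1 hXk hXk1, DphiE_diff Xtk1 Xk Xk1 hXk hXk1]
    simp only [PiLp.inner_apply, RCLike.inner_apply, conj_trivial, PiLp.sub_apply]
    calc ∑ i, (P i - Xtk1 i) * G i
        = ∑ i, (P i * (Real.log (Xk1 i) - Real.log (Xk i))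
            - Xtk1 i * (Real.log (Xk1 i) - Real.log (Xk i))) :=
          Finset.sum_congr rfl fun i _ => by rw [hG i]; ring
      _ = (∑ i, P i * (Real.log (Xk1 i) - Real.log (Xk i)))
            - ∑ i, Xtk1 i * (Real.log (Xk1 i) - Real.log (Xk i)) :=
          Finset.sum_sub_distrib _ _
      _ = _ := by ring
  -- linearity from hΔ
  have hlin : (inner ℝ Δ (Xtk1 - P) : ℝ)
      = (inner ℝ D (Xtk1 - P) : ℝ) + (inner ℝ C (Xtk1 - P) : ℝ)
        + εk * (inner ℝ G (Xtk1 - P) : ℝ) := by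
    rw [hΔ]
    simp [inner_add_left, real_inner_smul_left, PiLp.inner_apply, RCLike.inner_apply,
      conj_trivial, PiLp.smul_apply, smul_eq_mul, Finset.mul_sum, mul_assoc, mul_left_comm]
  have e1 : (inner ℝ D (Xtk1 - P) : ℝ) = -(inner ℝ D (P - Xtk1) : ℝ) := by
    rw [← inner_neg_right]; congr 1; abel
  have e2 : (inner ℝ G (Xtk1 - P) : ℝ) = -(inner ℝ G (P - Xtk1) : ℝ) := by
    rw [← inner_neg_right]; congr 1; abel
  have e3 : (inner ℝ C (Xtk1 - P) : ℝ) = (inner ℝ C Xtk1 : ℝ) - (inner ℝ C P : ℝ) := by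
    rw [inner_sub_right]
  have hμ' : εk * DphiE Xtk1 Xk1 ≤ εk * μk :=
    mul_le_mul_of_nonneg_left hμ hεk.le
  rw [e1, e2, e3, hGP] at hlin
  nlinarith [hlin, hΔb, hDb, hμ']
end
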